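/- Let Φ be a Drinfeld A-module of rank r over a finite A-field L, and Q an ideal of A coprime to the A-characteristic P of L. Then the Q-torsion module Φ[Q](L̄) is isomorphic to (A/Q)^r as an A-module. -/

import Mathlib

set_option synthInstance.maxHeartbeats 1000000
set_option maxHeartbeats 1000000
set_option linter.unusedSectionVars false
set_option linter.unusedVariables false

universe u v

open Submodule

section PartB
variable {R : Type u} [CommRing R] [IsDomain R] [IsPrincipalIdealRing R]

lemma gen_of_unit {M : Type v} [AddCommGroup M] [Module R M] (r : ℕ)
    {u : R} (hu : IsUnit u) (hkill : ∀ m : M, u • m = 0) :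
    ∃ x : Fin r → M, Submodule.span R (Set.range x) = ⊤ := by
  have hM : ∀ m : M, m = 0 := by
    intro m
    obtain ⟨v, hv⟩ := hu.exists_left_inv
    calc m = (1 : R) • m := (one_smul R m).symm
    _ = (v * u) • m := by rw [hv]
    _ = v • (u • m) := mul_smul v u m
    _ = 0 := by rw [hkill, smul_zero]
  refine ⟨fun _ => 0, ?_⟩
  rw [eq_top_iff]
  intro m _
  rw [hM m]
  exact Submodule.zero_mem _

lemma gen_of_prime {M : Type v} [AddCommGroup M] [Module R M] [Finite M]
    (r : ℕ) (hr : 0 < r) {π : R} (hπ : Prime π)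
    (hkill : ∀ m : M, π • m = 0)
    (hcard : Nat.card M = Nat.card (R ⧸ Ideal.span {π}) ^ r) :
    ∃ x : Fin r → M, Submodule.span R (Set.range x) = ⊤ := by
  set I : Ideal R := Ideal.span {π} with hI
  haveI : I.IsMaximal := PrincipalIdealRing.isMaximal_of_irreducible hπ.irreducible
  have hT : Module.IsTorsionBySet R M (I : Set R) :=
    (Module.isTorsionBySet_span_singleton_iff π).mpr hkill
  letI : Module (R ⧸ I) M := hT.module
  haveI : Finite (R ⧸ I) := by
    have h1 : 0 < Nat.card M := Nat.card_pos
    rw [hcard] at h1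
    rcases Nat.eq_zero_or_pos (Nat.card (R ⧸ I)) with h | h
    · rw [h, zero_pow hr.ne'] at h1; omega
    · exact (Nat.card_pos_iff.mp h).2
  letI : Field (R ⧸ I) := Ideal.Quotient.field I
  letI : Fintype M := Fintype.ofFinite M
  letI : Fintype (R ⧸ I) := Fintype.ofFinite _
  have hfr : Module.finrank (R ⧸ I) M = r := by
    have hc : Fintype.card M = Fintype.card (R ⧸ I) ^ Module.finrank (R ⧸ I) M :=
      Module.card_eq_pow_finrank (K := R ⧸ I)
    rw [← Nat.card_eq_fintype_card, ← Nat.card_eq_fintype_card, hcard] at hc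
    have h2 : 2 ≤ Nat.card (R ⧸ I) := by
      rw [Nat.card_eq_fintype_card]; exact Fintype.one_lt_card
    exact Nat.pow_right_injective h2 hc.symm
  let b : Module.Basis (Fin r) (R ⧸ I) M := Module.finBasisOfFinrankEq (R ⧸ I) M hfr
  refine ⟨b, ?_⟩
  rw [eq_top_iff]
  intro m _
  have hmem : m ∈ Submodule.span (R ⧸ I) (Set.range b) := by
    rw [b.span_eq]; trivial
  refine Submodule.span_induction ?_ ?_ ?_ ?_ hmem
  · exact fun y hy => Submodule.subset_span hy
  · exact Submodule.zero_mem _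
  · exact fun y z _ _ hy hz => Submodule.add_mem _ hy hz
  · intro c y _ hy
    obtain ⟨c', rfl⟩ := Ideal.Quotient.mk_surjective c
    rw [hT.mk_smul]
    exact Submodule.smul_mem _ _ hy

lemma gen_of_prime_pow {M : Type v} [AddCommGroup M] [Module R M] [Finite M]
    (r : ℕ) (hr : 0 < r) {π : R} (hπ : Prime π) (e : ℕ) (he : 0 < e)
    (hkill : ∀ m : M, (π ^ e) • m = 0)
    (hcard1 : Nat.card {x : M // π • x = 0} = Nat.card (R ⧸ Ideal.span {π}) ^ r) :
    ∃ x : Fin r → M, Submodule.span R (Set.range x) = ⊤ := by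
  classical
  let μ : M →ₗ[R] M := π • (LinearMap.id)
  set pM : Submodule R M := LinearMap.range μ with hpM
  set K : Submodule R M := LinearMap.ker μ with hK
  have hμ : ∀ m : M, μ m = π • m := fun m => rfl
  -- cardinalities
  haveI : Finite (M ⧸ pM) := Finite.of_surjective _ (Submodule.Quotient.mk_surjective pM)
  have hc1 : Nat.card M = Nat.card K * Nat.card (M ⧸ K) :=
    Submodule.card_eq_card_quotient_mul_card K
  have hc2 : Nat.card M = Nat.card pM * Nat.card (M ⧸ pM) :=
    Submodule.card_eq_card_quotient_mul_card pM
  have hc3 : Nat.card (M ⧸ K) = Nat.card pM := Nat.card_congr μ.quotKerEquivRange.toEquiv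
  have hcK : Nat.card K = Nat.card (R ⧸ Ideal.span {π}) ^ r := by
    rw [← hcard1]
    have hiff : ∀ m : M, m ∈ K ↔ π • m = 0 := by
      intro m; rw [hK, LinearMap.mem_ker, hμ]
    exact Nat.card_congr (Equiv.subtypeEquivRight hiff)
  have hpMpos : 0 < Nat.card pM := Nat.card_pos
  have hcQ : Nat.card (M ⧸ pM) = Nat.card (R ⧸ Ideal.span {π}) ^ r := by
    rw [hc3] at hc1
    have h4 : Nat.card pM * Nat.card (M ⧸ pM) = Nat.card pM * Nat.card K := by
      rw [← hc2, hc1, mul_comm]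
    have h5 := Nat.eq_of_mul_eq_mul_left hpMpos h4
    rw [h5, hcK]
  -- quotient is killed by π
  have hkillQ : ∀ m : M ⧸ pM, π • m = 0 := by
    intro m
    obtain ⟨m', rfl⟩ := Submodule.Quotient.mk_surjective pM m
    rw [← Submodule.Quotient.mk_smul, Submodule.Quotient.mk_eq_zero]
    exact ⟨m', rfl⟩
  obtain ⟨y, hy⟩ := gen_of_prime r hr hπ hkillQ hcQ
  choose x hx using fun i => Submodule.Quotient.mk_surjective pM (y i)
  set N : Submodule R M := Submodule.span R (Set.range x) with hN
  have hNsup : pM ⊔ N = ⊤ := by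
    rw [← Submodule.map_mkQ_eq_top, hN, Submodule.map_span, ← Set.range_comp]
    have : (pM.mkQ ∘ x) = y := funext fun i => hx i
    rw [this, hy]
  -- Nakayama iteration
  have key : ∀ j : ℕ, ∀ m : M, m ∈ N ⊔ LinearMap.range ((π ^ j) • (LinearMap.id : M →ₗ[R] M)) := by
    intro j
    induction j with
    | zero =>
      intro m
      apply Submodule.mem_sup_right
      exact ⟨m, by simp⟩
    | succ j ih =>
      intro m
      obtain ⟨n, hn, z, hz, hsum⟩ := Submodule.mem_sup.mp (ih m)
      obtain ⟨m', hm'⟩ := hz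
      -- m' decomposition
      have hm'mem : m' ∈ pM ⊔ N := hNsup ▸ Submodule.mem_top
      obtain ⟨w, hw, n', hn', hsum'⟩ := Submodule.mem_sup.mp hm'mem
      obtain ⟨m'', hm''⟩ := hw
      refine Submodule.mem_sup.mpr ⟨n + (π ^ j) • n', Submodule.add_mem _ hn (Submodule.smul_mem _ _ hn'), (π ^ (j+1)) • m'', ⟨m'', rfl⟩, ?_⟩
    -- n + π^j n' + π^(j+1) m'' = m
      have hz' : z = (π ^ j) • m' := by rw [← hm']; rfl
      have hμm : μ m'' = π • m'' := rfl
      rw [← hsum, hz', ← hsum', ← hm'', hμm]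
      rw [smul_add, add_assoc, add_comm ((π ^ j) • n')]
      congr 1
      congr 1
      rw [smul_smul, ← pow_succ]
  have : ∀ m : M, m ∈ N := by
    intro m
    obtain ⟨n, hn, z, hz, hsum⟩ := Submodule.mem_sup.mp (key e m)
    obtain ⟨m', hm'⟩ := hz
    have : z = (π ^ e) • m' := by rw [← hm']; rfl
    rw [this, hkill] at hsum
    rw [← hsum, add_zero]
    exact hn
  exact ⟨x, by rw [eq_top_iff]; exact fun m _ => this m⟩



/-- transfer of torsion-count between a torsion submodule and the ambient module -/
lemma count_transfer {M : Type v} [AddCommGroup M] [Module R M] {a d : R} (hd : d ∣ a) :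
    Nat.card {z : ↥(Submodule.torsionBy R M a) // d • z = 0} = Nat.card {m : M // d • m = 0} := by
  obtain ⟨c, rfl⟩ := hd
  refine Nat.card_congr ?_
  refine { toFun := fun z => ⟨(z.1 : M), congrArg Subtype.val z.2⟩,
           invFun := fun m => ⟨⟨m.1, ?_⟩, ?_⟩,
           left_inv := fun z => Subtype.ext (Subtype.ext rfl),
           right_inv := fun m => rfl }
  · rw [Submodule.mem_torsionBy_iff, mul_comm, mul_smul, m.2, smul_zero]
  · exact Subtype.ext m.2

lemma gen_of_counts (r : ℕ) (hr : 0 < r) (f : R) :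
    ∀ (_ : f ≠ 0) (M : Type v) (_ : AddCommGroup M), ∀ (_ : Module R M) (_ : Finite M),
    (∀ m : M, f • m = 0) →
    (∀ d : R, d ∣ f → Nat.card {x : M // d • x = 0} = Nat.card (R ⧸ Ideal.span {d}) ^ r) →
    ∃ x : Fin r → M, Submodule.span R (Set.range x) = ⊤ := by
  induction f using UniqueFactorizationMonoid.induction_on_coprime with
  | h0 => intro h; exact absurd rfl h
  | @h1 u hu =>
    intro _ M _ _ _ hkill _
    exact gen_of_unit r hu hkill
  | @hpr π i hπ =>
    intro hne M _ _ _ hkill hcount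
    rcases Nat.eq_zero_or_pos i with rfl | hi
    · exact gen_of_unit r (show IsUnit (π ^ 0) by rw [pow_zero]; exact isUnit_one) hkill
    · exact gen_of_prime_pow r hr hπ i hi hkill
        (hcount _ (dvd_pow_self _ hi.ne'))
  | @hcp a b hab iha ihb =>
    intro hne M _ _ _ hkill hcount
    have ha0 : a ≠ 0 := fun h => hne (by rw [h, zero_mul])
    have hb0 : b ≠ 0 := fun h => hne (by rw [h, mul_zero])
    obtain ⟨α, β, h1⟩ : IsCoprime a b := hab.isCoprime
    set Na := Submodule.torsionBy R M a with hNa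
    set Nb := Submodule.torsionBy R M b with hNb
    -- apply induction hypotheses to the torsion submodules
    obtain ⟨u', hu'⟩ := iha ha0 ↥Na inferInstance inferInstance inferInstance
      (fun m => Subtype.ext (by simpa using m.2))
      (fun d hd => by rw [count_transfer hd, hcount d (hd.mul_right b)])
    obtain ⟨v', hv'⟩ := ihb hb0 ↥Nb inferInstance inferInstance inferInstance
      (fun m => Subtype.ext (by simpa using m.2))
      (fun d hd => by rw [count_transfer hd, hcount d (hd.mul_left a)])
    set u : Fin r → M := fun i => (u' i : M) with hu
    set v : Fin r → M := fun i => (v' i : M) with hv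
    have hspanu : Submodule.span R (Set.range u) = Na := by
      have : Set.range u = Na.subtype '' Set.range u' := by
        rw [← Set.range_comp]; rfl
      rw [this, Submodule.span_image, hu', Submodule.map_top, Submodule.range_subtype]
    have hspanv : Submodule.span R (Set.range v) = Nb := by
      have : Set.range v = Nb.subtype '' Set.range v' := by
        rw [← Set.range_comp]; rfl
      rw [this, Submodule.span_image, hv', Submodule.map_top, Submodule.range_subtype]
    have hu_tor : ∀ i, a • u i = 0 := fun i => (u' i).2
    have hv_tor : ∀ i, b • v i = 0 := fun i => (v' i).2
    set w : Fin r → M := fun i => (β * b) • u i + (α * a) • v i with hw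
    -- identities
    have hidA : ∀ z : M, a • z = 0 → (β * b) • z = z := by
      intro z hz
      have : (β * b) • z = (1 - α * a) • z := by rw [← h1]; ring_nf
      rw [this, sub_smul, one_smul, mul_smul, hz, smul_zero, sub_zero]
    have hidB : ∀ z : M, b • z = 0 → (α * a) • z = z := by
      intro z hz
      have : (α * a) • z = (1 - β * b) • z := by rw [← h1]; ring_nf
      rw [this, sub_smul, one_smul, mul_smul, hz, smul_zero, sub_zero]
    have keyA : ∀ z : M, a • z = 0 → z ∈ Submodule.span R (Set.range w) := by
      intro z hz
      have hzmem : z ∈ Submodule.span R (Set.range u) := by rw [hspanu]; exact hz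
      obtain ⟨c, hc⟩ := (mem_span_range_iff_exists_fun R).mp hzmem
      have hsum : ∑ i, (β * b * c i) • w i = z := by
        rw [← hc]
        refine Finset.sum_congr rfl (fun i _ => ?_)
        rw [hw]
        simp only
        rw [smul_add]
        have t2 : (β * b * c i) • ((α * a) • v i) = 0 := by
          rw [smul_smul]
          have : β * b * c i * (α * a) = (β * c i * α * a) * b := by ring
          rw [this, mul_smul, hv_tor, smul_zero]
        have t1 : (β * b * c i) • ((β * b) • u i) = c i • u i := by
          rw [hidA (u i) (hu_tor i)]
          have : β * b * c i = c i * (β * b) := by ring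
          rw [this, mul_smul, hidA (u i) (hu_tor i)]
        rw [t1, t2, add_zero]
      rw [← hsum]
      exact Submodule.sum_mem _ (fun i _ =>
        Submodule.smul_mem _ _ (Submodule.subset_span (Set.mem_range_self i)))
    have keyB : ∀ z : M, b • z = 0 → z ∈ Submodule.span R (Set.range w) := by
      intro z hz
      have hzmem : z ∈ Submodule.span R (Set.range v) := by rw [hspanv]; exact hz
      obtain ⟨c, hc⟩ := (mem_span_range_iff_exists_fun R).mp hzmem
      have hsum : ∑ i, (α * a * c i) • w i = z := by
        rw [← hc]
        refine Finset.sum_congr rfl (fun i _ => ?_)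
        rw [hw]
        simp only
        rw [smul_add]
        have t1 : (α * a * c i) • ((β * b) • u i) = 0 := by
          rw [smul_smul]
          have : α * a * c i * (β * b) = (α * c i * β * b) * a := by ring
          rw [this, mul_smul, hu_tor, smul_zero]
        have t2 : (α * a * c i) • ((α * a) • v i) = c i • v i := by
          rw [hidB (v i) (hv_tor i)]
          have : α * a * c i = c i * (α * a) := by ring
          rw [this, mul_smul, hidB (v i) (hv_tor i)]
        rw [t1, t2, zero_add]
      rw [← hsum]
      exact Submodule.sum_mem _ (fun i _ =>
        Submodule.smul_mem _ _ (Submodule.subset_span (Set.mem_range_self i)))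
    refine ⟨w, ?_⟩
    rw [eq_top_iff]
    intro m _
    have hdecomp : m = (β * b) • m + (α * a) • m := by
      have h2 : ((α * a) + (β * b)) • m = m := by rw [h1, one_smul]
      conv_lhs => rw [← h2]
      rw [add_smul, add_comm]
    have hm1 : a • ((β * b) • m) = 0 := by
      rw [smul_smul]
      have : a * (β * b) = β * (a * b) := by ring
      rw [this, mul_smul, hkill, smul_zero]
    have hm2 : b • ((α * a) • m) = 0 := by
      rw [smul_smul]
      have : b * (α * a) = α * (a * b) := by ring
      rw [this, mul_smul, hkill, smul_zero]
    rw [hdecomp]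
    exact Submodule.add_mem _ (keyA _ hm1) (keyB _ hm2)


lemma main_iso (r : ℕ) (hr : 0 < r) (Q : Ideal R) (f : R) (hQf : Q = Ideal.span {f})
    (hf : f ≠ 0) (M : Type v) [AddCommGroup M] [Module R M] [Finite M]
    (hkill : ∀ m : M, f • m = 0)
    (hcount : ∀ d : R, d ∣ f → Nat.card {x : M // d • x = 0} = Nat.card (R ⧸ Ideal.span {d}) ^ r) :
    Nonempty (M ≃ₗ[R] (Fin r → R ⧸ Q)) := by
  classical
  obtain ⟨x, hx⟩ := gen_of_counts r hr f hf M inferInstance inferInstance inferInstance hkill hcount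
  -- the linear combination map
  let Ψ : (Fin r → R) →ₗ[R] M := Fintype.linearCombination R x
  have hΨ : ∀ c : Fin r → R, Ψ c = ∑ i, c i • x i := fun c => by
    simp [Ψ, Fintype.linearCombination_apply]
  have hsurj : Function.Surjective Ψ := by
    rw [← LinearMap.range_eq_top, Fintype.range_linearCombination, hx]
  set piQ : Submodule R (Fin r → R) :=
    Submodule.pi Set.univ (fun _ : Fin r => (Q : Submodule R R)) with hpiQ
  have hle : piQ ≤ LinearMap.ker Ψ := by
    intro c hc
    rw [LinearMap.mem_ker, hΨ]
    refine Finset.sum_eq_zero (fun i _ => ?_)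
    have hci : c i ∈ Q := hc i (Set.mem_univ i)
    rw [hQf, Ideal.mem_span_singleton] at hci
    obtain ⟨g, hg⟩ := hci
    rw [hg, mul_comm, mul_smul, hkill, smul_zero]
  let Ψ' : ((Fin r → R) ⧸ piQ) →ₗ[R] M := Submodule.liftQ piQ Ψ hle
  have hsurj' : Function.Surjective Ψ' := by
    intro m
    obtain ⟨c, hc⟩ := hsurj m
    exact ⟨Submodule.Quotient.mk c, by rwa [Submodule.liftQ_apply]⟩
  let E : ((Fin r → R) ⧸ piQ) ≃ₗ[R] (Fin r → R ⧸ Q) :=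
    Submodule.quotientPi (fun _ : Fin r => (Q : Submodule R R))
  let Θ : (Fin r → R ⧸ Q) →ₗ[R] M := Ψ'.comp (E.symm : (Fin r → R ⧸ Q) →ₗ[R] _)
  have hsurjΘ : Function.Surjective Θ := hsurj'.comp E.symm.surjective
  -- cardinalities
  have hcardM : Nat.card M = Nat.card (R ⧸ Q) ^ r := by
    have := hcount f dvd_rfl
    rw [← hQf] at this
    rw [← this]
    exact (Nat.card_congr (Equiv.subtypeUnivEquiv hkill)).symm
  haveI : Finite (R ⧸ Q) := by
    have h1 : 0 < Nat.card M := Nat.card_pos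
    rw [hcardM] at h1
    rcases Nat.eq_zero_or_pos (Nat.card (R ⧸ Q)) with h | h
    · rw [h, zero_pow hr.ne'] at h1; omega
    · exact (Nat.card_pos_iff.mp h).2
  have hcardeq : Nat.card (Fin r → R ⧸ Q) = Nat.card M := by
    rw [Nat.card_pi, Finset.prod_const, hcardM]
    simp
  have hbij : Function.Bijective Θ :=
    (Nat.bijective_iff_surjective_and_card Θ).mpr ⟨hsurjΘ, hcardeq⟩
  exact ⟨(LinearEquiv.ofBijective Θ hbij).symm⟩


end PartB



/-- A Drinfeld `F_q[T]`-module over an `A`-field `E` (with structure morphism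
`γ : A →+* E`), realized concretely through the identification of the Ore (twisted
polynomial) ring `E{τ}` with the ring of `F_q`-linear additive polynomials over `E`
under composition: `toFun a` is the additive polynomial through which `a ∈ A = F_q[T]`
acts, ring multiplication in `E{τ}` corresponding to composition of polynomials.
The conditions say: `Φ` is an `F_q`-algebra homomorphism `A → E{τ}`, `D ∘ Φ = γ`
(the `τ⁰`-coefficient, i.e. the linear coefficient of the additive polynomial, is `γ a`),
and `Φ ≠ γ·τ⁰`. -/
structure DrinfeldModule (Fq : Type*) [Field Fq] [Fintype Fq]
    (E : Type*) [Field E] (γ : Polynomial Fq →+* E) where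
  toFun : Polynomial Fq → Polynomial E
  map_one' : toFun 1 = Polynomial.X
  map_add' : ∀ a b, toFun (a + b) = toFun a + toFun b
  map_mul' : ∀ a b, toFun (a * b) = (toFun a).comp (toFun b)
  smul' : ∀ s : Fq, toFun (Polynomial.C s) = Polynomial.C (γ (Polynomial.C s)) * Polynomial.X
  additive' : ∀ a k, (toFun a).coeff k ≠ 0 → ∃ i : ℕ, k = Fintype.card Fq ^ i
  lin' : ∀ a, (toFun a).coeff 1 = γ a
  nontrivial' : ∃ a, toFun a ≠ Polynomial.C (γ a) * Polynomial.X

open Polynomial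

section DrinfeldAux
variable {Fq : Type*} [Field Fq] [Fintype Fq] {L : Type*} [Field L] [Fintype L]
  {γ : Polynomial Fq →+* L} (φ : DrinfeldModule Fq L γ)

lemma DM.coeff_zero (a : Polynomial Fq) : (φ.toFun a).coeff 0 = 0 := by
  by_contra h
  obtain ⟨i, hi⟩ := φ.additive' a 0 h
  exact (pow_ne_zero i Fintype.card_ne_zero) hi.symm

lemma DM.toFun_zero : φ.toFun 0 = 0 := by
  have := φ.map_add' 0 0
  rw [add_zero] at this
  have h2 : φ.toFun 0 + φ.toFun 0 = φ.toFun 0 + 0 := by rw [← this, add_zero]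
  exact (add_left_cancel h2)

lemma DM.charL (γ : Polynomial Fq →+* L) : CharP L (ringChar Fq) := by
  haveI : CharP Fq (ringChar Fq) := ringChar.charP Fq
  have hcast : ((ringChar Fq : ℕ) : L) = 0 := by
    have h1 : ((ringChar Fq : ℕ) : Polynomial Fq) = 0 := by
      rw [← Polynomial.C_eq_natCast, CharP.cast_eq_zero Fq, Polynomial.C_0]
    rw [← map_natCast γ, h1, map_zero]
  have hprimeFq : (ringChar Fq).Prime := CharP.char_is_prime Fq (ringChar Fq)
  have hdvd : ringChar L ∣ ringChar Fq := ringChar.dvd hcast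
  have hprimeL : (ringChar L).Prime := CharP.char_is_prime L (ringChar L)
  have : ringChar L = ringChar Fq := (Nat.prime_dvd_prime_iff_eq hprimeL hprimeFq).mp hdvd
  exact this ▸ ringChar.charP L

lemma DM.qL (γ : Polynomial Fq →+* L) : ((Fintype.card Fq : ℕ) : L) = 0 := by
  haveI : CharP Fq (ringChar Fq) := ringChar.charP Fq
  obtain ⟨n, hp, hcard⟩ := FiniteField.card Fq (ringChar Fq)
  haveI := DM.charL γ
  rw [hcard, Nat.cast_pow, CharP.cast_eq_zero L, zero_pow n.pos.ne']
end DrinfeldAux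

section DrinfeldAux2
variable {Fq : Type*} [Field Fq] [Fintype Fq] {L : Type*} [Field L] [Fintype L]
  {γ : Polynomial Fq →+* L} (φ : DrinfeldModule Fq L γ)

/-- evaluation of the additive polynomial at 0 -/
lemma DM.eval_zero (a : Polynomial Fq) :
    ((φ.toFun a).map (algebraMap L (AlgebraicClosure L))).eval 0 = 0 := by
  rw [← Polynomial.coeff_zero_eq_eval_zero, Polynomial.coeff_map, DM.coeff_zero, map_zero]

/-- additivity of evaluation -/
lemma DM.eval_add (a : Polynomial Fq) (x y : AlgebraicClosure L) :
    ((φ.toFun a).map (algebraMap L (AlgebraicClosure L))).eval (x + y) =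
    ((φ.toFun a).map (algebraMap L (AlgebraicClosure L))).eval x +
    ((φ.toFun a).map (algebraMap L (AlgebraicClosure L))).eval y := by
  classical
  set p := ringChar Fq with hp
  haveI : CharP Fq p := ringChar.charP Fq
  haveI hL : CharP L p := DM.charL γ
  haveI hLbar : CharP (AlgebraicClosure L) p :=
    charP_of_injective_algebraMap (algebraMap L (AlgebraicClosure L)).injective p
  obtain ⟨n, hprime, hcard⟩ := FiniteField.card Fq p
  haveI : Fact p.Prime := ⟨hprime⟩
  set G := (φ.toFun a).map (algebraMap L (AlgebraicClosure L)) with hG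
  have hsupp : ∀ k ∈ G.support, ∃ i : ℕ, k = Fintype.card Fq ^ i := by
    intro k hk
    apply φ.additive' a k
    intro hzero
    have : G.coeff k = 0 := by rw [hG, Polynomial.coeff_map, hzero, map_zero]
    exact (Polynomial.mem_support_iff.mp hk) this
  rw [Polynomial.eval_eq_sum, Polynomial.eval_eq_sum, Polynomial.eval_eq_sum]
  rw [Polynomial.sum_def, Polynomial.sum_def, Polynomial.sum_def, ← Finset.sum_add_distrib]
  refine Finset.sum_congr rfl (fun k hk => ?_)
  obtain ⟨i, rfl⟩ := hsupp k hk
  have hpow : (x + y) ^ (Fintype.card Fq) ^ i = x ^ (Fintype.card Fq) ^ i + y ^ (Fintype.card Fq) ^ i := by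
    rw [hcard, ← pow_mul]
    exact add_pow_char_pow x y p _
  rw [hpow, mul_add]

lemma DM.eval_neg (a : Polynomial Fq) (x : AlgebraicClosure L) :
    ((φ.toFun a).map (algebraMap L (AlgebraicClosure L))).eval (-x) =
    -((φ.toFun a).map (algebraMap L (AlgebraicClosure L))).eval x := by
  have h := DM.eval_add φ a x (-x)
  rw [add_neg_cancel, DM.eval_zero] at h
  exact eq_neg_of_add_eq_zero_right h.symm

end DrinfeldAux2

section DrinfeldAux3
variable {Fq : Type*} [Field Fq] [Fintype Fq] {L : Type*} [Field L] [Fintype L]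
  {γ : Polynomial Fq →+* L} (φ : DrinfeldModule Fq L γ)

lemma DM.derivative (a : Polynomial Fq) :
    Polynomial.derivative (φ.toFun a) = Polynomial.C (γ a) := by
  ext k
  rw [Polynomial.coeff_derivative]
  match k with
  | 0 =>
    rw [φ.lin' a]
    simp
  | (k+1) =>
    rw [Polynomial.coeff_C]
    simp only [Nat.add_eq_zero, and_false, if_false, Nat.succ_ne_zero]
    by_cases h : (φ.toFun a).coeff (k + 1 + 1) = 0
    · rw [h, zero_mul]
    · obtain ⟨i, hi⟩ := φ.additive' a (k + 1 + 1) h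
      have hi1 : i ≠ 0 := by
        intro h0
        rw [h0, pow_zero] at hi
        omega
      have hcast : ((k + 1 + 1 : ℕ) : L) = 0 := by
        rw [hi, Nat.cast_pow, DM.qL γ, zero_pow hi1]
      rw [show (((k + 1 : ℕ) : L) + 1) = ((k + 1 + 1 : ℕ) : L) by push_cast; ring, hcast, mul_zero]

lemma DM.separable (a : Polynomial Fq) (ha : γ a ≠ 0) : (φ.toFun a).Separable := by
  rw [Polynomial.separable_def, DM.derivative φ a]
  exact ⟨0, Polynomial.C (γ a)⁻¹, by
    rw [zero_mul, zero_add, ← Polynomial.C_mul, inv_mul_cancel₀ ha, Polynomial.C_1]⟩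

lemma DM.natDegree_pos (r : ℕ)
    (hrank : ∀ a : Polynomial Fq, a ≠ 0 →
      (φ.toFun a).natDegree = Fintype.card Fq ^ (r * a.natDegree))
    (a : Polynomial Fq) (ha : a ≠ 0) : φ.toFun a ≠ 0 := by
  intro h0
  have := hrank a ha
  rw [h0, Polynomial.natDegree_zero] at this
  have h2 := Nat.one_le_pow (r * a.natDegree) (Fintype.card Fq) Fintype.card_pos
  omega

/-- the number of roots of `Φ_a` in the algebraic closure -/
lemma DM.count_roots (r : ℕ)
    (hrank : ∀ a : Polynomial Fq, a ≠ 0 →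
      (φ.toFun a).natDegree = Fintype.card Fq ^ (r * a.natDegree))
    (d : Polynomial Fq) (hd : d ≠ 0) (hγd : γ d ≠ 0) :
    Nat.card {x : AlgebraicClosure L //
      ((φ.toFun d).map (algebraMap L (AlgebraicClosure L))).eval x = 0} =
      Fintype.card Fq ^ (r * d.natDegree) := by
  classical
  have hG0 : φ.toFun d ≠ 0 := DM.natDegree_pos φ r hrank d hd
  have hiff : ∀ x : AlgebraicClosure L,
      ((φ.toFun d).map (algebraMap L (AlgebraicClosure L))).eval x = 0 ↔
      x ∈ (φ.toFun d).rootSet (AlgebraicClosure L) := by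
    intro x
    rw [Polynomial.mem_rootSet_of_ne hG0, Polynomial.aeval_def, ← Polynomial.eval_map]
  rw [Nat.card_congr (Equiv.subtypeEquivRight hiff), Nat.card_eq_fintype_card,
    Polynomial.card_rootSet_eq_natDegree (DM.separable φ d hγd)
      (IsAlgClosed.splits ((φ.toFun d).map (algebraMap L (AlgebraicClosure L)))), hrank d hd]

lemma DM.card_quot (d : Polynomial Fq) (hd : d ≠ 0) :
    Nat.card (Polynomial Fq ⧸ Ideal.span {d}) = Fintype.card Fq ^ d.natDegree := by
  classical
  haveI : Module.Finite Fq (AdjoinRoot d) := Module.Finite.of_basis (AdjoinRoot.powerBasis hd).basis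
  haveI : Finite (AdjoinRoot d) := Module.finite_of_finite Fq
  letI : Fintype (AdjoinRoot d) := Fintype.ofFinite _
  have h1 : Nat.card (AdjoinRoot d) = Fintype.card Fq ^ d.natDegree := by
    rw [Nat.card_eq_fintype_card, Module.card_eq_pow_finrank (K := Fq),
      (AdjoinRoot.powerBasis hd).finrank]
    rfl
  exact h1

end DrinfeldAux3


/-- Let `Φ` be a Drinfeld `A`-module of rank `r` over a finite `A`-field `L` and `Q`
an ideal of `A = F_q[T]` coprime to the `A`-characteristic `P = ker γ` of `L`.  Then
the `Q`-torsion module `Φ[Q](L̄) = {x ∈ L̄ | Φ_a(x) = 0 ∀ a ∈ Q}` is isomorphic to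
`(A/Q)^r` as an `A`-module: there is a bijection which is additive and
`A`-equivariant (the `A`-action on torsion points being `a • x = Φ_a(x)`). -/
theorem torsion_module_structure (Fq : Type*) [Field Fq] [Fintype Fq]
    (L : Type*) [Field L] [Fintype L] (γ : Polynomial Fq →+* L)
    (φ : DrinfeldModule Fq L γ) (r : ℕ) (hr : 0 < r)
    (hrank : ∀ a : Polynomial Fq, a ≠ 0 →
      (φ.toFun a).natDegree = Fintype.card Fq ^ (r * a.natDegree))
    (Q : Ideal (Polynomial Fq)) (hQ : Q ⊔ RingHom.ker γ = ⊤) :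
    ∃ e : {x : AlgebraicClosure L |
            ∀ a ∈ Q, ((φ.toFun a).map (algebraMap L (AlgebraicClosure L))).eval x = 0} ≃
          (Fin r → Polynomial Fq ⧸ Q),
      (∀ (x y : AlgebraicClosure L) (hx : x ∈ _) (hy : y ∈ _) (hxy : x + y ∈ _),
        e ⟨x + y, hxy⟩ = e ⟨x, hx⟩ + e ⟨y, hy⟩) ∧
      (∀ (a : Polynomial Fq) (x : AlgebraicClosure L) (hx : x ∈ _)
        (hax : ((φ.toFun a).map (algebraMap L (AlgebraicClosure L))).eval x ∈ _),
        e ⟨((φ.toFun a).map (algebraMap L (AlgebraicClosure L))).eval x, hax⟩ =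
          Ideal.Quotient.mk Q a • e ⟨x, hx⟩) := by
  classical
  -- basic consequences of coprimality
  have hker_ne_top : RingHom.ker γ ≠ ⊤ := by
    intro h
    have h1 : (1 : Polynomial Fq) ∈ RingHom.ker γ := h ▸ trivial
    rw [RingHom.mem_ker, map_one] at h1
    exact one_ne_zero h1
  have hQne : Q ≠ ⊥ := by
    intro h
    rw [h, bot_sup_eq] at hQ
    exact hker_ne_top hQ
  have hQf : Ideal.span {Submodule.IsPrincipal.generator Q} = Q :=
    Ideal.span_singleton_generator Q
  set f := Submodule.IsPrincipal.generator Q with hfdef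
  have hf0 : f ≠ 0 := by
    intro h
    apply hQne
    rw [← hQf, h]
    simp
  have hfQ : f ∈ Q := by rw [← hQf]; exact Ideal.subset_span rfl
  have hγf : γ f ≠ 0 := by
    intro h
    have hsub : Q ≤ RingHom.ker γ := by
      rw [← hQf, Ideal.span_le]
      intro z hz
      rw [Set.mem_singleton_iff] at hz
      subst hz
      rw [SetLike.mem_coe, RingHom.mem_ker]
      exact h
    rw [sup_eq_right.mpr hsub] at hQ
    exact hker_ne_top hQ
  -- evaluation of products
  have heval_mul : ∀ (a b : Polynomial Fq) (x : AlgebraicClosure L),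
      ((φ.toFun (a * b)).map (algebraMap L (AlgebraicClosure L))).eval x =
      ((φ.toFun a).map (algebraMap L (AlgebraicClosure L))).eval
        (((φ.toFun b).map (algebraMap L (AlgebraicClosure L))).eval x) := by
    intro a b x
    rw [φ.map_mul', Polynomial.map_comp, Polynomial.eval_comp]
  set T := {x : AlgebraicClosure L |
      ∀ a ∈ Q, ((φ.toFun a).map (algebraMap L (AlgebraicClosure L))).eval x = 0} with hTdef
  have hroot_mem : ∀ (d : Polynomial Fq), d ∣ f → ∀ x : AlgebraicClosure L,
      ((φ.toFun d).map (algebraMap L (AlgebraicClosure L))).eval x = 0 → x ∈ T := by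
    intro d hd x hx a ha
    rw [← hQf, Ideal.mem_span_singleton] at ha
    obtain ⟨c, rfl⟩ := hd.trans ha
    rw [mul_comm, heval_mul c d x, hx, DM.eval_zero]
  have hmemT_iff : ∀ x : AlgebraicClosure L, x ∈ T ↔
      ((φ.toFun f).map (algebraMap L (AlgebraicClosure L))).eval x = 0 :=
    fun x => ⟨fun h => h f hfQ, fun h => hroot_mem f dvd_rfl x h⟩
  -- additive group structure on T
  letI addT : AddCommGroup ↥T := AddSubgroup.toAddCommGroup
    { carrier := T
      add_mem' := by
        intro x y hx hy
        intro a ha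
        rw [DM.eval_add φ, hx a ha, hy a ha, add_zero]
      zero_mem' := fun a ha => DM.eval_zero φ a
      neg_mem' := by
        intro x hx
        intro a ha
        rw [DM.eval_neg φ, hx a ha, neg_zero] }
  have coe_add : ∀ x y : ↥T, ((x + y : ↥T) : AlgebraicClosure L) = (x : AlgebraicClosure L) + y := fun x y => rfl
  have coe_zero : ((0 : ↥T) : AlgebraicClosure L) = 0 := rfl
  -- module structure
  have smul_mem : ∀ (a : Polynomial Fq) (x : ↥T),
      (((φ.toFun a).map (algebraMap L (AlgebraicClosure L))).eval x.1) ∈ T := by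
    intro a x b hb
    rw [← heval_mul b a x.1, mul_comm, heval_mul a b x.1, x.2 b hb, DM.eval_zero]
  letI smulT : SMul (Polynomial Fq) ↥T :=
    ⟨fun a x => ⟨((φ.toFun a).map (algebraMap L (AlgebraicClosure L))).eval x.1, smul_mem a x⟩⟩
  have smul_def : ∀ (a : Polynomial Fq) (x : ↥T),
      (a • x : ↥T).1 = ((φ.toFun a).map (algebraMap L (AlgebraicClosure L))).eval x.1 :=
    fun a x => rfl
  letI modT : Module (Polynomial Fq) ↥T :=
    { one_smul := fun x => Subtype.ext (by
        rw [smul_def, φ.map_one', Polynomial.map_X, Polynomial.eval_X])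
      mul_smul := fun a b x => Subtype.ext (by
        rw [smul_def, smul_def, smul_def, heval_mul])
      smul_zero := fun a => Subtype.ext (by
        rw [smul_def, coe_zero]
        exact DM.eval_zero φ a)
      smul_add := fun a x y => Subtype.ext (by
        rw [smul_def, coe_add, coe_add, smul_def, smul_def, DM.eval_add φ])
      add_smul := fun a b x => Subtype.ext (by
        rw [smul_def, coe_add, smul_def, smul_def, φ.map_add', Polynomial.map_add,
          Polynomial.eval_add])
      zero_smul := fun x => Subtype.ext (by
        rw [smul_def, coe_zero, DM.toFun_zero φ, Polynomial.map_zero, Polynomial.eval_zero]) }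
  -- finiteness
  haveI finT : Finite ↥T := by
    have hfin : T.Finite := by
      apply Set.Finite.subset
        (Polynomial.finite_setOf_isRoot
          (p := (φ.toFun f).map (algebraMap L (AlgebraicClosure L)))
          (Polynomial.map_ne_zero (DM.natDegree_pos φ r hrank f hf0)))
      intro x hx
      exact (hmemT_iff x).mp hx
    exact hfin.to_subtype
  -- f kills T
  have hkill : ∀ m : ↥T, f • m = 0 := fun m => Subtype.ext (by
    rw [smul_def, coe_zero]
    exact m.2 f hfQ)
  -- torsion counts
  have hcount : ∀ d : Polynomial Fq, d ∣ f →
      Nat.card {x : ↥T // d • x = 0} =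
      Nat.card (Polynomial Fq ⧸ Ideal.span {d}) ^ r := by
    intro d hd
    have hd0 : d ≠ 0 := fun h => hf0 (by rw [h] at hd; exact zero_dvd_iff.mp hd)
    have hγd : γ d ≠ 0 := by
      obtain ⟨c, hc⟩ := hd
      intro h
      apply hγf
      rw [hc, map_mul, h, zero_mul]
    have E : {x : ↥T // d • x = 0} ≃
        {x : AlgebraicClosure L //
          ((φ.toFun d).map (algebraMap L (AlgebraicClosure L))).eval x = 0} :=
      { toFun := fun z => ⟨z.1.1, congrArg Subtype.val z.2⟩
        invFun := fun w => ⟨⟨w.1, hroot_mem d hd w.1 w.2⟩, Subtype.ext w.2⟩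
        left_inv := fun z => Subtype.ext (Subtype.ext rfl)
        right_inv := fun w => rfl }
    rw [Nat.card_congr E, DM.count_roots φ r hrank d hd0 hγd, DM.card_quot d hd0,
      ← pow_mul, mul_comm d.natDegree r]
  -- the abstract isomorphism
  obtain ⟨LE⟩ := main_iso (R := Polynomial Fq) r hr Q f hQf.symm hf0 ↥T hkill hcount
  have key : ∀ (a : Polynomial Fq) (c : Polynomial Fq ⧸ Q),
      a • c = Ideal.Quotient.mk Q a • c := by
    intro a c
    obtain ⟨b, rfl⟩ := Ideal.Quotient.mk_surjective c
    rw [smul_eq_mul, ← map_mul]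
    rfl
  refine ⟨LE.toEquiv, ?_, ?_⟩
  · intro x y hx hy hxy
    have h1 : (⟨x + y, hxy⟩ : ↥T) = (⟨x, hx⟩ : ↥T) + (⟨y, hy⟩ : ↥T) := rfl
    show LE _ = LE _ + LE _
    rw [h1]
    exact LE.map_add _ _
  · intro a x hx hax
    have h1 : (⟨((φ.toFun a).map (algebraMap L (AlgebraicClosure L))).eval x, hax⟩ : ↥T) =
        a • (⟨x, hx⟩ : ↥T) := rfl
    show LE _ = _
    rw [h1, LE.map_smul]
    funext i
    rw [Pi.smul_apply, Pi.smul_apply, key]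
    rfl
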